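/- Let R = lcm(n₀,…,n_K), q_k = R/n_k, M_k = lcm(n₀,…,n_k), d_k = M_k/M_{k−1} (with M_{−1} = 1). Fix k, and define sets P_i = {0,…,v_{i,k}−1} for i < k, P_k = {0,…,n_k−1}, P_i = {0,…,d_i−1} for i > k, where v_{i,k} = s_{i,k}/s_{i−1,k}, s_{i,k} = M_i/gcd(M_i, n_k), s_{−1,k} = 1. Then the map h(p) = Σ_{i=0}^{K} p_i q_i mod R is a bijection from Π P_i onto {0,…,R−1}. -/

import Mathlib

namespace Stmt11Aux

def Lc (m : ℕ → ℕ) : ℕ → ℕ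
  | 0 => 1
  | (j+1) => Nat.lcm (Lc m j) (m j)

lemma Lc_pos (m : ℕ → ℕ) {n : ℕ} (hm : ∀ j < n, 0 < m j) : 0 < Lc m n := by
  induction n with
  | zero => simp [Lc]
  | succ j ih =>
    have h1 := ih (fun i hi => hm i (Nat.lt_succ_of_lt hi))
    have h2 := hm j (Nat.lt_succ_self j)
    have : Nat.lcm (Lc m j) (m j) ≠ 0 := Nat.lcm_ne_zero (by omega) (by omega)
    show 0 < Nat.lcm (Lc m j) (m j)
    omega

lemma m_dvd_Lc (m : ℕ → ℕ) {j n : ℕ} (h : j < n) : m j ∣ Lc m n := by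
  induction n with
  | zero => omega
  | succ i ih =>
    rcases Nat.lt_succ_iff_lt_or_eq.mp h with h' | h'
    · exact (ih h').trans (Nat.dvd_lcm_left _ _)
    · subst h'; exact Nat.dvd_lcm_right _ _

lemma Lc_dvd_succ (m : ℕ → ℕ) (j : ℕ) : Lc m j ∣ Lc m (j+1) :=
  Nat.dvd_lcm_left _ _

lemma core (m : ℕ → ℕ) : ∀ n : ℕ, (∀ j < n, 0 < m j) → ∀ c : ℕ → ℤ,
    (∀ j < n, |c j| < ((Lc m (j+1) / Lc m j : ℕ) : ℤ)) →
    ((Lc m n : ℤ) ∣ ∑ j ∈ Finset.range n, c j * ((Lc m n / m j : ℕ) : ℤ)) →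
    ∀ j < n, c j = 0 := by
  intro n
  induction n with
  | zero => intro _ _ _ _ j hj; omega
  | succ n ih =>
    intro hm c hc hdvd
    have hm' : ∀ j < n, 0 < m j := fun j hj => hm j (Nat.lt_succ_of_lt hj)
    set L := Lc m n with hLdef
    have hL : 0 < L := Lc_pos m hm'
    have hmn : 0 < m n := hm n (Nat.lt_succ_self n)
    set g := Nat.gcd L (m n) with hg
    have hgpos : 0 < g := Nat.gcd_pos_of_pos_left _ hL
    set t := m n / g with ht
    have htpos : 0 < t := Nat.div_pos (Nat.le_of_dvd hmn (Nat.gcd_dvd_right _ _)) hgpos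
    have hmngt : m n = g * t := (Nat.mul_div_cancel' (Nat.gcd_dvd_right L (m n))).symm
    have hLsucc : Lc m (n+1) = L * t := by
      show Nat.lcm L (m n) = L * t
      rw [ht, Nat.lcm, Nat.mul_div_assoc L (Nat.gcd_dvd_right L (m n))]
    have hen : Lc m (n+1) / Lc m n = t := by
      rw [hLsucc, ← hLdef, Nat.mul_div_cancel_left _ hL]
    have hcoef : ∀ j < n, Lc m (n+1) / m j = (L / m j) * t := by
      intro j hj
      rw [hLsucc, Nat.mul_comm L t, Nat.mul_div_assoc t (m_dvd_Lc m hj), Nat.mul_comm]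
    have hcoefn : Lc m (n+1) / m n = L / g := by
      rw [hLsucc, hmngt, Nat.mul_comm g t, ← Nat.div_div_eq_div_mul,
        Nat.mul_div_cancel _ htpos]
    -- rewrite the sum
    have hsum : ∑ j ∈ Finset.range (n+1), c j * ((Lc m (n+1) / m j : ℕ) : ℤ)
        = (t : ℤ) * (∑ j ∈ Finset.range n, c j * ((L / m j : ℕ) : ℤ)) + c n * ((L / g : ℕ) : ℤ) := by
      rw [Finset.sum_range_succ, hcoefn, Finset.mul_sum]
      congr 1
      apply Finset.sum_congr rfl
      intro j hj
      rw [hcoef j (Finset.mem_range.mp hj)]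
      push_cast
      ring
    have hLTdvd : ((L : ℤ) * t) ∣ ∑ j ∈ Finset.range (n+1), c j * ((Lc m (n+1) / m j : ℕ) : ℤ) := by
      have : ((Lc m (n+1) : ℕ) : ℤ) = (L : ℤ) * t := by rw [hLsucc]; push_cast; ring
      rwa [this] at hdvd
    -- c n = 0
    have hcop : Nat.Coprime t (L / g) := by
      have := Nat.coprime_div_gcd_div_gcd (m := L) (n := m n) hgpos
      exact (Nat.coprime_comm.mp this)
    have htdvdcn : (t : ℤ) ∣ c n := by
      have h1 : (t : ℤ) ∣ c n * ((L / g : ℕ) : ℤ) := by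
        have h2 : (t : ℤ) ∣ ∑ j ∈ Finset.range (n+1), c j * ((Lc m (n+1) / m j : ℕ) : ℤ) :=
          (dvd_mul_left _ _).trans hLTdvd
        rw [hsum] at h2
        exact (dvd_add_right (Dvd.intro _ rfl)).mp h2
      have hic : IsCoprime (t : ℤ) ((L / g : ℕ) : ℤ) := by
        rw [Nat.isCoprime_iff_coprime]; exact hcop
      exact hic.dvd_of_dvd_mul_right h1
    have hcn : c n = 0 := by
      have habs := hc n (Nat.lt_succ_self n)
      rw [hen] at habs
      exact Int.eq_zero_of_abs_lt_dvd htdvdcn habs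
    -- reduce
    have hred : (L : ℤ) ∣ ∑ j ∈ Finset.range n, c j * ((L / m j : ℕ) : ℤ) := by
      rw [hsum, hcn, zero_mul, add_zero] at hLTdvd
      rcases hLTdvd with ⟨e, he⟩
      refine ⟨e, ?_⟩
      have htne : (t : ℤ) ≠ 0 := by exact_mod_cast htpos.ne'
      have : (t : ℤ) * (∑ j ∈ Finset.range n, c j * ((L / m j : ℕ) : ℤ)) = (t:ℤ) * ((L:ℤ) * e) := by
        rw [he]; ring
      exact mul_left_cancel₀ htne this
    intro j hj
    rcases Nat.lt_succ_iff_lt_or_eq.mp hj with h' | h'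
    · exact ih hm' c (fun j hj => hc j (Nat.lt_succ_of_lt hj)) hred j h'
    · subst h'; exact hcn

lemma Lc_zero (m : ℕ → ℕ) : Lc m 0 = 1 := rfl

lemma Lc_succ (m : ℕ → ℕ) (j : ℕ) : Lc m (j+1) = Nat.lcm (Lc m j) (m j) := rfl

lemma inj_nat (m : ℕ → ℕ) (n : ℕ) (hm : ∀ j < n, 0 < m j) (a b : ℕ → ℕ)
    (ha : ∀ j < n, a j < Lc m (j+1) / Lc m j) (hb : ∀ j < n, b j < Lc m (j+1) / Lc m j)
    (hsum : (∑ j ∈ Finset.range n, a j * (Lc m n / m j)) % Lc m n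
          = (∑ j ∈ Finset.range n, b j * (Lc m n / m j)) % Lc m n) :
    ∀ j < n, a j = b j := by
  set c : ℕ → ℤ := fun j => (a j : ℤ) - b j with hcdef
  have hc : ∀ j < n, |c j| < ((Lc m (j+1) / Lc m j : ℕ) : ℤ) := by
    intro j hj
    have h1 := ha j hj; have h2 := hb j hj
    rw [hcdef, abs_sub_lt_iff]
    constructor <;> [skip; skip] <;> push_cast <;> omega
  have hdvd : (Lc m n : ℤ) ∣ ∑ j ∈ Finset.range n, c j * ((Lc m n / m j : ℕ) : ℤ) := by
    have hmod : (∑ j ∈ Finset.range n, a j * (Lc m n / m j)) ≡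
        (∑ j ∈ Finset.range n, b j * (Lc m n / m j)) [MOD Lc m n] := hsum
    have := hmod.dvd
    have heq : ∑ j ∈ Finset.range n, c j * ((Lc m n / m j : ℕ) : ℤ)
        = -(((∑ j ∈ Finset.range n, b j * (Lc m n / m j) : ℕ) : ℤ)
            - ((∑ j ∈ Finset.range n, a j * (Lc m n / m j) : ℕ) : ℤ)) := by
      simp only [Nat.cast_sum, Nat.cast_mul, neg_sub, ← Finset.sum_sub_distrib]
      rw [← Finset.sum_neg_distrib]
      apply Finset.sum_congr rfl
      intro j _
      simp only [hcdef]
      ring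
    rw [heq]
    exact dvd_neg.mpr this
  intro j hj
  have h0 := core m n hm c hc hdvd j hj
  have h1 : (a j : ℤ) - b j = 0 := h0
  omega

lemma prod_e (m : ℕ → ℕ) (n : ℕ) (hm : ∀ j < n, 0 < m j) :
    ∏ j ∈ Finset.range n, (Lc m (j+1) / Lc m j) = Lc m n := by
  induction n with
  | zero => simp [Lc]
  | succ n ih =>
    rw [Finset.prod_range_succ, ih (fun j hj => hm j (Nat.lt_succ_of_lt hj)),
      Nat.mul_div_cancel' (Lc_dvd_succ m n)]

lemma slcm (a b : ℕ) : (a / Nat.gcd a b) * b = Nat.lcm a b := by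
  rw [Nat.lcm, Nat.mul_comm (a / Nat.gcd a b) b,
    ← Nat.mul_div_assoc b (Nat.gcd_dvd_left a b), Nat.mul_comm b a]

lemma lcm_range_succ (f : ℕ → ℕ) (n : ℕ) :
    Finset.lcm (Finset.range (n + 1)) f = Nat.lcm (f n) (Finset.lcm (Finset.range n) f) := by
  rw [Finset.range_add_one, Finset.lcm_insert]; rfl

end Stmt11Aux

open Stmt11Aux in
theorem stmt11 (K k : ℕ) (hk : k ≤ K) (nr : ℕ → ℕ) (hnr : ∀ i ≤ K, 0 < nr i)
    (R : ℕ) (hR : R = Finset.lcm (Finset.range (K + 1)) nr)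
    (q : ℕ → ℕ) (hq : ∀ i, q i = R / nr i)
    (Mf : ℕ → ℕ) (hMf : ∀ i, Mf i = Finset.lcm (Finset.range (i + 1)) nr)
    (d : ℕ → ℕ) (hd0 : d 0 = Mf 0) (hd : ∀ i, d (i + 1) = Mf (i + 1) / Mf i)
    (s : ℕ → ℕ) (hs : ∀ i, s i = Mf i / Nat.gcd (Mf i) (nr k))
    (v : ℕ → ℕ) (hv0 : v 0 = s 0) (hv : ∀ i, v (i + 1) = s (i + 1) / s i)
    (bound : ℕ → ℕ)
    (hbound : ∀ i, bound i = if i < k then v i else if i = k then nr k else d i) :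
    Set.BijOn (fun p : ℕ → ℕ => (∑ i ∈ Finset.range (K + 1), p i * q i) % R)
      {p | (∀ i ≤ K, p i < bound i) ∧ ∀ i, K < i → p i = 0}
      (Set.Iio R) := by
  classical
  -- permutation
  set σ : ℕ → ℕ := fun j => if j = 0 then k else if j ≤ k then j - 1 else j with hσdef
  set τ : ℕ → ℕ := fun i => if i = k then 0 else if i < k then i + 1 else i with hτdef
  set m : ℕ → ℕ := fun j => nr (σ j) with hmdef
  have hσ0 : σ 0 = k := by simp [hσdef]
  have hσmid : ∀ j, 1 ≤ j → j ≤ k → σ j = j - 1 := by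
    intro j h1 h2
    simp only [hσdef]
    rw [if_neg (by omega), if_pos h2]
  have hσhi : ∀ j, k < j → σ j = j := by
    intro j h1
    simp only [hσdef]
    rw [if_neg (by omega), if_neg (by omega)]
  have hσK : ∀ j ≤ K, σ j ≤ K := by
    intro j hj; simp only [hσdef]; split_ifs <;> omega
  have hτK : ∀ i ≤ K, τ i ≤ K := by
    intro i hi; simp only [hτdef]; split_ifs <;> omega
  have hστ : ∀ j ≤ K, τ (σ j) = j := by
    intro j hj
    rcases Nat.eq_zero_or_pos j with h0 | h0
    · subst h0; rw [hσ0]; simp [hτdef]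
    rcases Nat.lt_or_ge k j with h1 | h1
    · rw [hσhi j h1]
      simp only [hτdef]
      rw [if_neg (by omega), if_neg (by omega)]
    · rw [hσmid j h0 h1]
      simp only [hτdef]
      rw [if_neg (by omega), if_pos (by omega)]
      omega
  have hτσ : ∀ i ≤ K, σ (τ i) = i := by
    intro i hi
    rcases Nat.lt_trichotomy i k with h1 | h1 | h1
    · have : τ i = i + 1 := by simp only [hτdef]; rw [if_neg (by omega), if_pos h1]
      rw [this, hσmid (i+1) (by omega) (by omega)]
      omega
    · have : τ i = 0 := by simp only [hτdef]; rw [if_pos h1]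
      rw [this, hσ0, h1]
    · have : τ i = i := by simp only [hτdef]; rw [if_neg (by omega), if_neg (by omega)]
      rw [this, hσhi i h1]
  have hmpos : ∀ j < K + 1, 0 < m j := by
    intro j hj
    exact hnr (σ j) (hσK j (by omega))
  have hnrk : 0 < nr k := hnr k hk
  have hm0 : m 0 = nr k := by rw [hmdef]; simp only; rw [hσ0]
  -- claim A
  have hA : ∀ j ≤ k, Lc m (j + 1) = Nat.lcm (Finset.lcm (Finset.range j) nr) (nr k) := by
    intro j
    induction j with
    | zero =>
      intro _
      rw [Lc_succ, Lc_zero, hm0]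
      simp [Nat.lcm]
    | succ j ih =>
      intro hjk
      have hmj : m (j + 1) = nr j := by
        rw [hmdef]; simp only; rw [hσmid (j+1) (by omega) hjk]; simp
      rw [Lc_succ, ih (by omega), hmj, lcm_range_succ]
      rw [Nat.lcm_assoc, Nat.lcm_comm (nr k) (nr j), ← Nat.lcm_assoc,
        Nat.lcm_comm (Finset.lcm (Finset.range j) nr) (nr j), Nat.lcm_assoc]
  have hstep : ∀ n, Mf (n + 1) = Nat.lcm (nr (n + 1)) (Mf n) := by
    intro n
    rw [hMf (n + 1), hMf n, lcm_range_succ]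
  -- claim B
  have hB : ∀ j, k ≤ j → Lc m (j + 1) = Mf j := by
    intro j hj
    induction j with
    | zero =>
      have hk0 : k = 0 := by omega
      rw [hA 0 (by omega), hMf 0, hk0, lcm_range_succ, Nat.lcm_comm]
    | succ j ih =>
      rcases Nat.lt_or_ge k (j + 1) with h' | h'
      · have hkj : k ≤ j := by omega
        have hmj : m (j + 1) = nr (j + 1) := by
          rw [hmdef]; simp only; rw [hσhi (j+1) h']
        rw [Lc_succ, ih hkj, hmj, hstep j, Nat.lcm_comm]
      · have hkj : k = j + 1 := by omega
        rw [hA (j + 1) (by omega), hstep j, hkj, Nat.lcm_comm, ← hMf j]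
  have hLK : Lc m (K + 1) = R := by rw [hB K hk, hMf K, hR]
  have hRpos : 0 < R := hLK ▸ Lc_pos m hmpos
  -- bounds claim
  have hC : ∀ j ≤ K, bound (σ j) = Lc m (j + 1) / Lc m j := by
    intro j hjK
    match j, hjK with
    | 0, _ =>
      rw [hσ0, hbound k, if_neg (lt_irrefl k), if_pos rfl, Lc_succ, Lc_zero, hm0,
        Nat.lcm_one_left, Nat.div_one]
    | (j+1), hjK =>
      rcases Nat.lt_or_ge j k with hjk | hjk
      · -- σ (j+1) = j, j < k
        rw [hσmid (j+1) (by omega) (by omega)]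
        simp only [Nat.add_sub_cancel]
        rw [hbound j, if_pos hjk]
        have hLj1 : Lc m (j + 2) = s j * nr k := by
          rw [hA (j + 1) (by omega : j + 1 ≤ k), ← hMf j, hs j, slcm]
        match j with
        | 0 =>
          rw [hv0, hLj1, Lc_succ, Lc_zero, hm0, Nat.lcm_one_left,
            Nat.mul_div_cancel _ hnrk]
        | (j+1) =>
          have hLj : Lc m (j + 2) = s j * nr k := by
            rw [hA (j + 1) (by omega : j + 1 ≤ k), ← hMf j, hs j, slcm]
          rw [hv j, hLj1, hLj, Nat.mul_div_mul_right _ _ hnrk]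
      · -- σ (j+1) = j+1, j+1 > k
        rw [hσhi (j+1) (by omega), hbound (j + 1), if_neg (by omega : ¬ (j + 1 < k)),
          if_neg (by omega : ¬ (j + 1 = k)), hd j, hB (j + 1) (by omega), hB j hjk]
  -- sum reindexing
  have hsum_eq : ∀ p : ℕ → ℕ,
      ∑ j ∈ Finset.range (K + 1), p (σ j) * (Lc m (K + 1) / m j)
      = ∑ i ∈ Finset.range (K + 1), p i * q i := by
    intro p
    refine Finset.sum_nbij' σ τ ?_ ?_ ?_ ?_ ?_
    · intro a ha; exact Finset.mem_range.mpr (by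
        have := hσK a (Nat.lt_succ_iff.mp (Finset.mem_range.mp ha)); omega)
    · intro a ha; exact Finset.mem_range.mpr (by
        have := hτK a (Nat.lt_succ_iff.mp (Finset.mem_range.mp ha)); omega)
    · intro a ha; exact hστ a (Nat.lt_succ_iff.mp (Finset.mem_range.mp ha))
    · intro a ha; exact hτσ a (Nat.lt_succ_iff.mp (Finset.mem_range.mp ha))
    · intro a ha
      rw [hq (σ a), hLK, hmdef]
  -- the three parts
  set S : Set (ℕ → ℕ) := {p | (∀ i ≤ K, p i < bound i) ∧ ∀ i, K < i → p i = 0} with hSdef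
  set F : (ℕ → ℕ) → ℕ := fun p => (∑ i ∈ Finset.range (K + 1), p i * q i) % R with hFdef
  have hmaps : Set.MapsTo F S (Set.Iio R) := by
    intro p _; exact Nat.mod_lt _ hRpos
  have hinj : Set.InjOn F S := by
    intro p₁ h₁ p₂ h₂ heq
    have key : ∀ j < K + 1, p₁ (σ j) = p₂ (σ j) := by
      apply inj_nat m (K + 1) hmpos
      · intro j hj
        rw [← hC j (by omega)]
        exact h₁.1 (σ j) (hσK j (by omega))
      · intro j hj
        rw [← hC j (by omega)]
        exact h₂.1 (σ j) (hσK j (by omega))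
      · rw [hsum_eq p₁, hsum_eq p₂, hLK]
        exact heq
    funext i
    rcases Nat.lt_or_ge K i with hi | hi
    · rw [h₁.2 i hi, h₂.2 i hi]
    · have := key (τ i) (by have := hτK i hi; omega)
      rwa [hτσ i hi] at this
  have hprod : ∏ i ∈ Finset.range (K + 1), bound i = R := by
    rw [← hLK, ← prod_e m (K + 1) hmpos]
    refine Finset.prod_nbij' τ σ ?_ ?_ ?_ ?_ ?_
    · intro a ha; exact Finset.mem_range.mpr (by
        have := hτK a (Nat.lt_succ_iff.mp (Finset.mem_range.mp ha)); omega)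
    · intro a ha; exact Finset.mem_range.mpr (by
        have := hσK a (Nat.lt_succ_iff.mp (Finset.mem_range.mp ha)); omega)
    · intro a ha; exact hτσ a (Nat.lt_succ_iff.mp (Finset.mem_range.mp ha))
    · intro a ha; exact hστ a (Nat.lt_succ_iff.mp (Finset.mem_range.mp ha))
    · intro a ha
      have haK : a ≤ K := Nat.lt_succ_iff.mp (Finset.mem_range.mp ha)
      rw [← hC (τ a) (hτK a haK), hτσ a haK]
  -- finset realization of S
  set unpack : (∀ i ∈ Finset.range (K + 1), ℕ) → (ℕ → ℕ) :=
    fun f i => if h : i ∈ Finset.range (K + 1) then f i h else 0 with hunpack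
  set Pi : Finset (∀ i ∈ Finset.range (K + 1), ℕ) :=
    (Finset.range (K + 1)).pi (fun i => Finset.range (bound i)) with hPi
  set T : Finset (ℕ → ℕ) := Pi.image unpack with hT
  have hval : ∀ (f : ∀ i ∈ Finset.range (K + 1), ℕ) (i : ℕ) (hi : i ∈ Finset.range (K + 1)),
      unpack f i = f i hi := by
    intro f i hi
    simp only [hunpack]
    rw [dif_pos hi]
  have hval0 : ∀ (f : ∀ i ∈ Finset.range (K + 1), ℕ) (i : ℕ), i ∉ Finset.range (K + 1) →
      unpack f i = 0 := by
    intro f i hi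
    simp only [hunpack]
    rw [dif_neg hi]
  have hunpack_inj : Set.InjOn unpack ↑Pi := by
    intro f _ g _ hfg
    funext i hi
    have h1 := congrFun hfg i
    rwa [hval f i hi, hval g i hi] at h1
  have hTcard : T.card = R := by
    rw [hT, Finset.card_image_of_injOn hunpack_inj, hPi, Finset.card_pi]
    simpa using hprod
  have hTS : ↑T = S := by
    ext p
    simp only [hT, Finset.coe_image, Set.mem_image, Finset.mem_coe, hSdef, Set.mem_setOf_eq]
    constructor
    · rintro ⟨f, hf, rfl⟩
      rw [hPi, Finset.mem_pi] at hf
      constructor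
      · intro i hi
        have hmem : i ∈ Finset.range (K + 1) := Finset.mem_range.mpr (by omega)
        rw [hval f i hmem]
        exact Finset.mem_range.mp (hf i hmem)
      · intro i hi
        exact hval0 f i (by simp only [Finset.mem_range]; omega)
    · rintro ⟨h1, h2⟩
      refine ⟨fun i _ => p i, ?_, ?_⟩
      · rw [hPi, Finset.mem_pi]
        intro i hi
        exact Finset.mem_range.mpr (h1 i (Nat.lt_succ_iff.mp (Finset.mem_range.mp hi)))
      · funext i
        by_cases hi : i ∈ Finset.range (K + 1)
        · exact hval (fun i _ => p i) i hi
        · exact (hval0 (fun i _ => p i) i hi).trans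
            (h2 i (by simp only [Finset.mem_range] at hi; omega)).symm
  have hsurj : Set.SurjOn F S (Set.Iio R) := by
    intro x hx
    have hinjT : Set.InjOn F ↑T := by rw [hTS]; exact hinj
    have himgcard : (T.image F).card = R := by
      rw [Finset.card_image_of_injOn hinjT, hTcard]
    have hsub : T.image F ⊆ Finset.range R := by
      intro y hy
      rcases Finset.mem_image.mp hy with ⟨p, hp, rfl⟩
      exact Finset.mem_range.mpr (Nat.mod_lt _ hRpos)
    have himg : T.image F = Finset.range R :=
      Finset.eq_of_subset_of_card_le hsub (by rw [himgcard, Finset.card_range])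
    have hxmem : x ∈ T.image F := by rw [himg]; exact Finset.mem_range.mpr hx
    rcases Finset.mem_image.mp hxmem with ⟨p, hp, hfp⟩
    exact ⟨p, by rw [← hTS]; exact hp, hfp⟩
  exact ⟨hmaps, hinj, hsurj⟩
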